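/- If A ∈ GL₂(ℤ) has two negative real eigenvalues, then the semidirect product ℤ² ⋊_A ℤ is not bi-orderable. -/

import Mathlib

open Matrix Polynomial

/-- A group is bi-orderable if it admits a strict total order invariant under
left and right multiplication. -/
def IsBiOrderable (G : Type*) [Group G] : Prop :=
  ∃ r : G → G → Prop, IsStrictTotalOrder G r ∧
    (∀ f g h : G, r g h → r (f * g) (f * h)) ∧
    (∀ f g h : G, r g h → r (g * f) (h * f))

/-- The automorphism of `ℤ²` (written multiplicatively) given by a matrix
`A ∈ GL₂(ℤ)`. -/
noncomputable def glAut (A : GL (Fin 2) ℤ) : MulAut (Multiplicative (Fin 2 → ℤ)) :=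
  AddEquiv.toMultiplicative
    ((Matrix.GeneralLinearGroup.toLin A).toLinearEquiv.toAddEquiv)

/-- The monodromy action of `ℤ` on `ℤ²` generated by `A ∈ GL₂(ℤ)`. -/
noncomputable def monodromy (A : GL (Fin 2) ℤ) :
    Multiplicative ℤ →* MulAut (Multiplicative (Fin 2 → ℤ)) :=
  zpowersHom _ (glAut A)

section Aux

lemma charpoly_fin_two' {R} [CommRing R] (M : Matrix (Fin 2) (Fin 2) R) :
    M.charpoly = X^2 - C M.trace * X + C M.det := by
  rw [Matrix.charpoly, Matrix.det_fin_two, Matrix.trace_fin_two, Matrix.det_fin_two]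
  simp [charmatrix_apply_eq, charmatrix_apply_ne]
  ring

end Aux

theorem torusBundleGroup_not_biOrderable (A : GL (Fin 2) ℤ) (lam₁ lam₂ : ℝ)
    (hchar : ((A : Matrix (Fin 2) (Fin 2) ℤ).map ((↑·) : ℤ → ℝ)).charpoly =
      (X - C lam₁) * (X - C lam₂))
    (h₁ : lam₁ < 0) (h₂ : lam₂ < 0) :
    ¬ IsBiOrderable (SemidirectProduct (Multiplicative (Fin 2 → ℤ))
        (Multiplicative ℤ) (monodromy A)) := by
  set M : Matrix (Fin 2) (Fin 2) ℤ := (A : Matrix (Fin 2) (Fin 2) ℤ) with hM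
  -- extract trace and determinant information
  have hmapdet : (M.map ((↑·) : ℤ → ℝ)).det = (M.det : ℝ) := by
    rw [show (M.map ((↑·) : ℤ → ℝ)) = (Int.castRingHom ℝ).mapMatrix M from rfl,
      ← RingHom.map_det]
    rfl
  have hmaptr : (M.map ((↑·) : ℤ → ℝ)).trace = (M.trace : ℝ) := by
    simp [Matrix.trace, Matrix.diag, Matrix.map_apply]
  have hcast : (M.map ((↑·) : ℤ → ℝ)).charpoly =
      X^2 - C ((M.trace : ℝ)) * X + C ((M.det : ℝ)) := by
    rw [charpoly_fin_two', hmapdet, hmaptr]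
  have hexp : (X - C lam₁) * (X - C lam₂) =
      X^2 - C (lam₁ + lam₂) * X + C (lam₁ * lam₂) := by
    simp [C_add, C_mul]; ring
  have hkey : (X^2 - C ((M.trace : ℝ)) * X + C ((M.det : ℝ)) : ℝ[X]) =
      X^2 - C (lam₁ + lam₂) * X + C (lam₁ * lam₂) := by
    rw [← hcast, hchar, hexp]
  have htr : (M.trace : ℝ) = lam₁ + lam₂ := by
    have h := congrArg (fun p => Polynomial.coeff p 1) hkey
    simp only [coeff_add, coeff_sub, coeff_C_mul, coeff_X_one, coeff_C, coeff_X_pow] at h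
    norm_num at h
    linarith
  have hdet : (M.det : ℝ) = lam₁ * lam₂ := by
    have h := congrArg (fun p => Polynomial.coeff p 0) hkey
    simp only [coeff_add, coeff_sub, coeff_C_mul, coeff_X_zero, coeff_C, coeff_X_pow] at h
    norm_num at h
    exact h
  have hdetpos : (0 : ℝ) < (M.det : ℝ) := by
    rw [hdet]; exact mul_pos_of_neg_of_neg h₁ h₂
  have hdetunit : IsUnit M.det :=
    (Matrix.isUnit_iff_isUnit_det M).mp ⟨A, rfl⟩
  have hdet1 : M.det = 1 := by
    rcases Int.isUnit_iff.mp hdetunit with h | h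
    · exact h
    · exfalso; rw [h] at hdetpos; norm_num at hdetpos
  have htrneg : M.trace ≤ -1 := by
    have h1 : (M.trace : ℝ) < 0 := by rw [htr]; linarith
    have h2 : M.trace < 0 := by exact_mod_cast h1
    omega
  -- Cayley–Hamilton: M² + 1 = trace • M
  have hCH : M * M + 1 = M.trace • M := by
    have h0 := Matrix.aeval_self_charpoly M
    rw [charpoly_fin_two', hdet1] at h0
    have h3 : M^2 - M.trace • M + 1 = 0 := by
      simpa [sq, Algebra.smul_def, Matrix.scalar_apply] using h0
    have h2 : M^2 + 1 = M.trace • M := by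
      linear_combination (norm := (push_cast; abel)) h3
    simpa [sq] using h2
  have hvec : ∀ v : Fin 2 → ℤ,
      M.mulVec (M.mulVec v) + v = M.trace • M.mulVec v := by
    intro v
    have h := congrArg (fun N => N.mulVec v) hCH
    simpa only [Matrix.add_mulVec, Matrix.one_mulVec, Matrix.mulVec_mulVec,
      Matrix.smul_mulVec] using h
  -- Now the order-theoretic argument
  rintro ⟨r, hsto, hL, hR⟩
  -- basic positivity facts
  have hmul : ∀ g h, r 1 g → r 1 h → r 1 (g * h) := by
    intro g h hg hh
    exact hsto.trans _ _ _ hg (by simpa using hL g 1 h hh)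
  have hconj : ∀ g c, r 1 g → r 1 (c * g * c⁻¹) := by
    intro g c hg
    have h1 : r c⁻¹ (g * c⁻¹) := by simpa using hR c⁻¹ 1 g hg
    have h2 := hL c _ _ h1
    simpa [mul_assoc] using h2
  have hnotboth : ∀ g, r 1 g → r 1 g⁻¹ → False := by
    intro g hg hg'
    have h := hmul g g⁻¹ hg hg'
    simp only [mul_inv_cancel] at h
    exact hsto.irrefl 1 h
  have hpow : ∀ g (n : ℕ), r 1 g → r 1 (g ^ (n + 1)) := by
    intro g n hg
    induction n with
    | zero => simpa using hg
    | succ k ih => rw [pow_succ]; exact hmul _ _ ih hg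
  -- the inclusion of ℤ² and the generator t
  set ι : Multiplicative (Fin 2 → ℤ) →* SemidirectProduct (Multiplicative (Fin 2 → ℤ))
      (Multiplicative ℤ) (monodromy A) := SemidirectProduct.inl with hι
  set t : SemidirectProduct (Multiplicative (Fin 2 → ℤ)) (Multiplicative ℤ) (monodromy A) :=
    SemidirectProduct.inr (Multiplicative.ofAdd (1 : ℤ)) with ht
  have hact : ∀ v : Fin 2 → ℤ,
      t * ι (Multiplicative.ofAdd v) * t⁻¹ = ι (Multiplicative.ofAdd (M.mulVec v)) := by
    intro v
    rw [ht, hι, ← MonoidHom.map_inv, ← SemidirectProduct.inl_aut]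
    congr 1
  -- core lemma: no v can have ι v positive
  have hcore : ∀ v : Fin 2 → ℤ, r 1 (ι (Multiplicative.ofAdd v)) → False := by
    intro v hv
    have hv1 : r 1 (ι (Multiplicative.ofAdd (M.mulVec v))) := by
      rw [← hact]; exact hconj _ _ hv
    have hv2 : r 1 (ι (Multiplicative.ofAdd (M.mulVec (M.mulVec v)))) := by
      rw [← hact]; exact hconj _ _ hv1
    -- sum is positive
    have hsum : r 1 (ι (Multiplicative.ofAdd (M.mulVec (M.mulVec v) + v))) := by
      have h := hmul _ _ hv2 hv
      rw [← MonoidHom.map_mul] at h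
      exact h
    rw [hvec v] at hsum
    -- but it is a negative power of a positive element
    set n : ℕ := (-M.trace - 1).toNat with hn
    have hneg : M.trace • (M.mulVec v) = -(((n + 1 : ℕ)) • M.mulVec v) := by
      rw [← Nat.cast_smul_eq_nsmul ℤ, ← neg_smul]
      congr 1
      rw [hn]; push_cast; omega
    have hzpow : ι (Multiplicative.ofAdd (M.trace • M.mulVec v)) =
        (ι (Multiplicative.ofAdd (M.mulVec v)) ^ (n + 1))⁻¹ := by
      rw [hneg, ofAdd_neg, map_inv, ofAdd_nsmul, map_pow]
    rw [hzpow] at hsum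
    exact hnotboth _ (hpow _ n hv1) hsum
  -- conclude using trichotomy on a nonzero vector
  have hne : ι (Multiplicative.ofAdd (fun _ => (1 : ℤ))) ≠ 1 := by
    intro h
    have h2 := congrArg SemidirectProduct.left h
    simp only [hι, SemidirectProduct.left_inl, SemidirectProduct.one_left] at h2
    have h3 := congrArg Multiplicative.toAdd h2
    simp at h3
    exact one_ne_zero (congrFun h3 0)
  rcases (by have := hsto.trichotomous 1 (ι (Multiplicative.ofAdd (fun _ => (1 : ℤ)))); tauto :
      r 1 (ι (Multiplicative.ofAdd (fun _ => (1 : ℤ)))) ∨ 1 = ι (Multiplicative.ofAdd (fun _ => (1 : ℤ))) ∨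
      r (ι (Multiplicative.ofAdd (fun _ => (1 : ℤ)))) 1) with h | h | h
  · exact hcore _ h
  · exact hne h.symm
  · have h4 : r 1 (ι (Multiplicative.ofAdd (fun _ => (1 : ℤ))))⁻¹ := by
      simpa using hL (ι (Multiplicative.ofAdd (fun _ => (1 : ℤ))))⁻¹ _ _ h
    rw [← map_inv, ← ofAdd_neg] at h4
    exact hcore _ h4
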